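/- arXiv:1909.00367 — 5 statements merged into one kernel-verified Lean document; each statement's English description precedes it below -/
import Mathlib

section
/- Fix n ≥ 1, σ > 0, a > 0, and 0 < ε < √n·σ. Let f_ε : ℝ^n → ℝ be the spherical Gaussian mixture with 2n components, common variance σ^2 and common amplitude a, whose mean vectors are ±(√n·σ − ε)·e_i for i = 1, …, n, i.e. f_ε(x) = a · Σ_{i=1}^{n} [ exp(−|x − (√n σ − ε)e_i|^2/(2σ^2)) + exp(−|x + (√n σ − ε)e_i|^2/(2σ^2)) ]. Then the Hessian of f_ε at the origin equals 2a · exp(−(√n σ − ε)^2/(2σ^2)) · σ^{−2} · [σ^{−2}(√n σ − ε)^2 − n] · I_n, which is a negative definite matrix. -/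
open MeasureTheory Matrix Real

section Helpers
open RealInnerProductSpace

lemma lin_hasFDerivAt {n : ℕ} (w v z : EuclideanSpace ℝ (Fin n)) :
    HasFDerivAt (fun x => ⟪x - w, v⟫) (innerSL ℝ v) z := by
  have h : (fun x : EuclideanSpace ℝ (Fin n) => ⟪x - w, v⟫) =
      fun x => (innerSL ℝ v) x - ⟪v, w⟫ := by
    funext x
    simp only [innerSL_apply_apply, inner_sub_left]
    rw [real_inner_comm x v, real_inner_comm w v]
  rw [h]
  exact ((innerSL ℝ v).hasFDerivAt).sub_const _

lemma gauss_hasFDerivAt {n : ℕ} {s : ℝ} (hs : s ≠ 0) (w z : EuclideanSpace ℝ (Fin n)) :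
    HasFDerivAt (fun x => Real.exp (-‖x - w‖ ^ 2 / (2 * s)))
      ((-(s⁻¹ * Real.exp (-‖z - w‖ ^ 2 / (2 * s)))) • innerSL ℝ (z - w)) z := by
  have hid : HasFDerivAt (fun x : EuclideanSpace ℝ (Fin n) => x - w)
      (ContinuousLinearMap.id ℝ _) z := (hasFDerivAt_id z).sub_const w
  have hsq := hid.inner ℝ hid
  have h2 := ((hsq.const_mul (-(2 * s)⁻¹)).exp)
  have hfun : (fun x : EuclideanSpace ℝ (Fin n) => Real.exp (-‖x - w‖ ^ 2 / (2 * s)))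
      = fun x => Real.exp (-(2 * s)⁻¹ * ⟪x - w, x - w⟫) := by
    funext x
    rw [real_inner_self_eq_norm_sq]
    ring_nf
  rw [hfun]
  refine h2.congr_fderiv ?_
  ext u
  simp only [ContinuousLinearMap.smul_apply, innerSL_apply_apply, ContinuousLinearMap.comp_apply,
    ContinuousLinearMap.prod_apply, ContinuousLinearMap.coe_id', id_eq, fderivInnerCLM_apply,
    smul_eq_mul]
  rw [real_inner_self_eq_norm_sq, real_inner_comm u (z - w)]
  field_simp
  ring

lemma fderiv_f_apply {n : ℕ} {s a : ℝ} (hs : s ≠ 0) (w : Fin n → EuclideanSpace ℝ (Fin n))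
    (f : EuclideanSpace ℝ (Fin n) → ℝ)
    (hf : f = fun x => a * ∑ i, (Real.exp (-‖x - w i‖ ^ 2 / (2 * s)) +
        Real.exp (-‖x - (-w i)‖ ^ 2 / (2 * s)))) (z : EuclideanSpace ℝ (Fin n)) :
    HasFDerivAt f (a • ∑ i, ((-(s⁻¹ * Real.exp (-‖z - w i‖ ^ 2 / (2 * s)))) • innerSL ℝ (z - w i)
      + (-(s⁻¹ * Real.exp (-‖z - (-w i)‖ ^ 2 / (2 * s)))) • innerSL ℝ (z - (-w i)))) z := by
  rw [hf]
  exact (HasFDerivAt.fun_sum fun i _ =>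
    (gauss_hasFDerivAt hs (w i) z).add (gauss_hasFDerivAt hs (-w i) z)).const_mul a

lemma term_hasFDerivAt {n : ℕ} {s : ℝ} (hs : s ≠ 0) (w0 v : EuclideanSpace ℝ (Fin n)) :
    HasFDerivAt (fun z => -(s⁻¹ * Real.exp (-‖z - w0‖ ^ 2 / (2 * s))) * ⟪z - w0, v⟫)
      ((-(s⁻¹ * Real.exp (-‖(0 : EuclideanSpace ℝ (Fin n)) - w0‖ ^ 2 / (2 * s)))) • innerSL ℝ v
        + ⟪(0 : EuclideanSpace ℝ (Fin n)) - w0, v⟫ •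
          (-(s⁻¹ • ((-(s⁻¹ * Real.exp (-‖(0 : EuclideanSpace ℝ (Fin n)) - w0‖ ^ 2 / (2 * s)))) •
            innerSL ℝ ((0 : EuclideanSpace ℝ (Fin n)) - w0))))) 0 := by
  have hc : HasFDerivAt (fun z => -(s⁻¹ * Real.exp (-‖z - w0‖ ^ 2 / (2 * s))))
      (-(s⁻¹ • ((-(s⁻¹ * Real.exp (-‖(0 : EuclideanSpace ℝ (Fin n)) - w0‖ ^ 2 / (2 * s)))) •
        innerSL ℝ ((0 : EuclideanSpace ℝ (Fin n)) - w0)))) 0 :=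
    ((gauss_hasFDerivAt hs w0 0).const_mul s⁻¹).neg
  exact hc.mul (lin_hasFDerivAt w0 v 0)

end Helpers

open RealInnerProductSpace
set_option maxHeartbeats 1000000 in
/-- For `n ≥ 1`, `σ > 0`, `a > 0` and `0 < ε < √n σ`, the Hessian at the origin of the
spherical Gaussian mixture with `2n` components, common variance `σ²`, common amplitude `a`
and means `±(√n σ - ε) eᵢ` equals
`2a exp(-(√n σ - ε)²/(2σ²)) σ⁻² [σ⁻²(√n σ - ε)² - n] • Iₙ`, a negative definite matrix. -/
theorem symmetric_gmm_hessian_negdef (n : ℕ) (hn : 1 ≤ n) (σ a ε : ℝ)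
    (hσ : 0 < σ) (ha : 0 < a) (hε : 0 < ε) (hεlt : ε < Real.sqrt n * σ)
    (f : EuclideanSpace ℝ (Fin n) → ℝ)
    (hf : ∀ x, f x = a * ∑ i : Fin n,
      (Real.exp (-‖x - (Real.sqrt n * σ - ε) • EuclideanSpace.single i 1‖ ^ 2 /
          (2 * σ ^ 2)) +
        Real.exp (-‖x + (Real.sqrt n * σ - ε) • EuclideanSpace.single i 1‖ ^ 2 /
          (2 * σ ^ 2)))) :
    (Matrix.of fun i j : Fin n =>
        fderiv ℝ (fun z => fderiv ℝ f z (EuclideanSpace.single j 1)) 0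
          (EuclideanSpace.single i 1))
      = (2 * a * Real.exp (-(Real.sqrt n * σ - ε) ^ 2 / (2 * σ ^ 2)) * (σ ^ 2)⁻¹ *
          ((σ ^ 2)⁻¹ * (Real.sqrt n * σ - ε) ^ 2 - n)) • (1 : Matrix (Fin n) (Fin n) ℝ) ∧
    (∀ y : Fin n → ℝ, y ≠ 0 →
      y ⬝ᵥ ((2 * a * Real.exp (-(Real.sqrt n * σ - ε) ^ 2 / (2 * σ ^ 2)) * (σ ^ 2)⁻¹ *
          ((σ ^ 2)⁻¹ * (Real.sqrt n * σ - ε) ^ 2 - n)) •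
            (1 : Matrix (Fin n) (Fin n) ℝ)).mulVec y < 0) := by
  have hs : (σ ^ 2 : ℝ) ≠ 0 := by positivity
  set c : ℝ := Real.sqrt n * σ - ε with hc
  set w : Fin n → EuclideanSpace ℝ (Fin n) := fun i => c • EuclideanSpace.single i 1 with hw
  have hfe : f = fun x => a * ∑ i, (Real.exp (-‖x - w i‖ ^ 2 / (2 * σ ^ 2)) +
      Real.exp (-‖x - (-w i)‖ ^ 2 / (2 * σ ^ 2))) := by
    funext x
    rw [hf x]
    congr 1
    refine Finset.sum_congr rfl fun i _ => ?_
    rw [sub_neg_eq_add]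
  constructor
  · ext i j
    -- first derivative pointwise formula
    have hd1 : (fun z => fderiv ℝ f z (EuclideanSpace.single j 1)) = fun z =>
        a * ∑ i', (-(((σ:ℝ) ^ 2)⁻¹ * Real.exp (-‖z - w i'‖ ^ 2 / (2 * σ ^ 2))) *
            ⟪z - w i', EuclideanSpace.single j 1⟫ +
          -(((σ:ℝ) ^ 2)⁻¹ * Real.exp (-‖z - (-w i')‖ ^ 2 / (2 * σ ^ 2))) *
            ⟪z - (-w i'), EuclideanSpace.single j 1⟫) := by
      funext z
      rw [(fderiv_f_apply hs w f hfe z).fderiv]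
      simp [smul_eq_mul, Finset.mul_sum, inner_sub_left, inner_add_left]
      exact Finset.sum_congr rfl fun _ _ => by ring
    rw [Matrix.of_apply, hd1]
    have hsnd := (HasFDerivAt.fun_sum fun i' (_ : i' ∈ Finset.univ) =>
      (term_hasFDerivAt hs (w i') (EuclideanSpace.single j 1)).fun_add
        (term_hasFDerivAt hs (-(w i')) (EuclideanSpace.single j 1))).const_mul a
    rw [hsnd.fderiv]
    simp only [ContinuousLinearMap.smul_apply, ContinuousLinearMap.sum_apply,
      ContinuousLinearMap.add_apply, ContinuousLinearMap.neg_apply, innerSL_apply_apply,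
      smul_eq_mul, zero_sub, norm_neg, inner_neg_left, inner_neg_neg, neg_neg, hw,
      norm_smul, EuclideanSpace.norm_single, Real.norm_eq_abs, mul_one, sq_abs,
      real_inner_smul_left, EuclideanSpace.inner_single_left, EuclideanSpace.single_apply,
      RCLike.inner_apply, conj_trivial]
    simp only [abs_one, mul_one, one_mul, Matrix.smul_apply, Matrix.one_apply, smul_eq_mul,
      sq_abs]
    have hterm : ∀ x : Fin n,
        (-((σ ^ 2)⁻¹ * rexp (-c ^ 2 / (2 * σ ^ 2))) * (if j = i then 1 else 0) +
            -(c * if x = j then 1 else 0) *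
              -((σ ^ 2)⁻¹ *
                  (-((σ ^ 2)⁻¹ * rexp (-c ^ 2 / (2 * σ ^ 2))) * -(c * if x = i then 1 else 0))) +
          (-((σ ^ 2)⁻¹ * rexp (-c ^ 2 / (2 * σ ^ 2))) * (if j = i then 1 else 0) +
            (c * if x = j then 1 else 0) *
              -((σ ^ 2)⁻¹ *
                  (-((σ ^ 2)⁻¹ * rexp (-c ^ 2 / (2 * σ ^ 2))) * (c * if x = i then 1 else 0)))) =
        (-(2 * (σ ^ 2)⁻¹ * rexp (-c ^ 2 / (2 * σ ^ 2)))) * (if j = i then 1 else 0) +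
          (2 * (σ ^ 2)⁻¹ * (σ ^ 2)⁻¹ * rexp (-c ^ 2 / (2 * σ ^ 2)) * c ^ 2) *
            (if x = j then (if x = i then 1 else 0) else 0)) := by
      intro x
      by_cases h1 : x = j <;> by_cases h2 : x = i <;>
        by_cases h3 : j = i <;> simp [h1, h2, h3] <;> ring_nf <;> simp_all <;> ring
    rw [Finset.sum_congr rfl fun x _ => hterm x]
    rw [Finset.sum_add_distrib, Finset.sum_const, ← Finset.mul_sum,
      Finset.sum_ite_eq' Finset.univ j (fun x => if x = i then (1:ℝ) else 0)]
    by_cases h3 : j = i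
    · subst h3
      simp [Finset.card_univ, Fintype.card_fin, nsmul_eq_mul]
      ring
    · have h4 : ¬ i = j := fun h => h3 h.symm
      simp [h3, h4, Finset.card_univ, Fintype.card_fin, nsmul_eq_mul]
  · intro y hy
    have hc0 : 0 < c := sub_pos.mpr hεlt
    have hsq : Real.sqrt n ^ 2 = (n : ℝ) := Real.sq_sqrt (Nat.cast_nonneg n)
    have h2 : c ^ 2 < (n : ℝ) * σ ^ 2 := by nlinarith [Real.sqrt_nonneg (n : ℝ)]
    have hfac : (σ ^ 2)⁻¹ * c ^ 2 - (n : ℝ) < 0 := by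
      have h3 : (σ ^ 2)⁻¹ * c ^ 2 < (σ ^ 2)⁻¹ * ((n : ℝ) * σ ^ 2) :=
        mul_lt_mul_of_pos_left h2 (by positivity)
      have h4 : (σ ^ 2)⁻¹ * ((n : ℝ) * σ ^ 2) = n := by field_simp
      linarith
    have hκ : 2 * a * rexp (-c ^ 2 / (2 * σ ^ 2)) * (σ ^ 2)⁻¹ *
        ((σ ^ 2)⁻¹ * c ^ 2 - (n : ℝ)) < 0 :=
      mul_neg_of_pos_of_neg (by positivity) hfac
    have hyy : 0 < y ⬝ᵥ y := by
      have hnn : 0 ≤ y ⬝ᵥ y := Finset.sum_nonneg fun i _ => mul_self_nonneg (y i)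
      have hne : y ⬝ᵥ y ≠ 0 := fun h => hy (dotProduct_self_eq_zero.mp h)
      exact lt_of_le_of_ne hnn (Ne.symm hne)
    have heq : y ⬝ᵥ ((2 * a * rexp (-c ^ 2 / (2 * σ ^ 2)) * (σ ^ 2)⁻¹ *
        ((σ ^ 2)⁻¹ * c ^ 2 - (n : ℝ))) • (1 : Matrix (Fin n) (Fin n) ℝ)).mulVec y =
        (2 * a * rexp (-c ^ 2 / (2 * σ ^ 2)) * (σ ^ 2)⁻¹ *
        ((σ ^ 2)⁻¹ * c ^ 2 - (n : ℝ))) * (y ⬝ᵥ y) := by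
      rw [Matrix.smul_mulVec, Matrix.one_mulVec, dotProduct_smul, smul_eq_mul]
    rw [heq]
    exact mul_neg_of_neg_of_pos hκ hyy
end

section
/- Fix n ≥ 1, σ > 0, a > 0, and 0 < ε < √n·σ. Let f_ε : ℝ^n → ℝ be the spherical Gaussian mixture with 2n components, common variance σ^2 and common amplitude a, whose mean vectors are ±(√n·σ − ε)·e_i for i = 1, …, n. Then f_ε has a (strict) local maximum at the origin, and the Euclidean distance from the origin to each of the 2n mean vectors equals √n·σ − ε. -/
set_option maxHeartbeats 1000000

open MeasureTheory Matrix Real RealInnerProductSpace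

lemma cosh_bound' (t : ℝ) (ht : |t| ≤ 1) : Real.cosh t ≤ 1 + t^2/2 + t^4 := by
  have h1 := Real.exp_bound ht (n := 4) (by norm_num)
  have h2 := Real.exp_bound (x := -t) (by rwa [abs_neg]) (n := 4) (by norm_num)
  have e1 : ∑ m ∈ Finset.range 4, t^m / m.factorial = 1 + t + t^2/2 + t^3/6 := by
    norm_num [Finset.sum_range_succ, Nat.factorial]
  have e2 : ∑ m ∈ Finset.range 4, (-t)^m / m.factorial = 1 - t + t^2/2 - t^3/6 := by
    norm_num [Finset.sum_range_succ, Nat.factorial]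
    ring
  rw [e1] at h1; rw [e2, abs_neg] at h2
  have habs : |t|^4 = t^4 := by rw [← abs_pow]; exact abs_of_nonneg (by positivity)
  rw [habs] at h1 h2
  have h1' := abs_sub_le_iff.1 h1
  have h2' := abs_sub_le_iff.1 h2
  rw [Real.cosh_eq]
  have ht4 : (0:ℝ) ≤ t^4 := by positivity
  norm_num [Nat.factorial] at h1' h2' ⊢
  nlinarith [h1'.1, h2'.1]

/-- For `n ≥ 1`, `σ > 0`, `a > 0` and `0 < ε < √n σ`, the spherical Gaussian mixture with
`2n` components, common variance `σ²`, common amplitude `a` and means `±(√n σ - ε) eᵢ`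
has a strict local maximum at the origin, and the distance from the origin to each of the
`2n` mean vectors equals `√n σ - ε`. -/
theorem symmetric_gmm_strict_local_max (n : ℕ) (hn : 1 ≤ n) (σ a ε : ℝ)
    (hσ : 0 < σ) (ha : 0 < a) (hε : 0 < ε) (hεlt : ε < Real.sqrt n * σ)
    (f : EuclideanSpace ℝ (Fin n) → ℝ)
    (hf : ∀ x, f x = a * ∑ i : Fin n,
      (Real.exp (-‖x - (Real.sqrt n * σ - ε) • EuclideanSpace.single i 1‖ ^ 2 /
          (2 * σ ^ 2)) +
        Real.exp (-‖x + (Real.sqrt n * σ - ε) • EuclideanSpace.single i 1‖ ^ 2 /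
          (2 * σ ^ 2)))) :
    (∃ U ∈ nhds (0 : EuclideanSpace ℝ (Fin n)),
      ∀ x ∈ U, x ≠ 0 → f x < f 0) ∧
    ∀ i : Fin n,
      dist (0 : EuclideanSpace ℝ (Fin n))
          ((Real.sqrt n * σ - ε) • EuclideanSpace.single i 1) = Real.sqrt n * σ - ε ∧
      dist (0 : EuclideanSpace ℝ (Fin n))
          (-((Real.sqrt n * σ - ε) • EuclideanSpace.single i 1)) = Real.sqrt n * σ - ε := by
  set r : ℝ := Real.sqrt n * σ - ε with hrdef
  have hr : 0 < r := by simp [hrdef]; linarith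
  have hn' : (0:ℝ) < n := by exact_mod_cast hn
  have hsq : Real.sqrt n ^ 2 = n := Real.sq_sqrt (le_of_lt hn')
  have hr2 : r^2 < n * σ^2 := by
    have : r < Real.sqrt n * σ := by simp [hrdef]; linarith
    nlinarith [Real.sqrt_nonneg (n:ℝ), hr]
  -- key rewriting of f
  have hfx : ∀ x : EuclideanSpace ℝ (Fin n),
      f x = (2*a*Real.exp (-r^2/(2*σ^2))) *
        (Real.exp (-‖x‖^2/(2*σ^2)) * ∑ i : Fin n, Real.cosh (r * x i / σ^2)) := by
    intro x
    rw [hf, Finset.mul_sum, Finset.mul_sum, Finset.mul_sum]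
    apply Finset.sum_congr rfl
    intro i _
    have hip : (inner ℝ x (r • EuclideanSpace.single i (1:ℝ)) : ℝ) = r * x i := by
      rw [real_inner_smul_right, EuclideanSpace.inner_single_right]
      simp
    have hnorm : ‖r • EuclideanSpace.single i (1:ℝ)‖^2 = r^2 := by
      rw [norm_smul]
      simp [abs_of_pos hr]
    have hns : ‖x - r • EuclideanSpace.single i (1:ℝ)‖^2 = ‖x‖^2 - 2*(r * x i) + r^2 := by
      rw [norm_sub_sq_real, hip, hnorm]
    have hna : ‖x + r • EuclideanSpace.single i (1:ℝ)‖^2 = ‖x‖^2 + 2*(r * x i) + r^2 := by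
      rw [norm_add_sq_real, hip, hnorm]
    rw [hns, hna, Real.cosh_eq]
    rw [show -(‖x‖^2 - 2*(r*x i) + r^2)/(2*σ^2)
        = -r^2/(2*σ^2) + (-‖x‖^2/(2*σ^2)) + r * x i / σ^2 from by field_simp; ring]
    rw [show -(‖x‖^2 + 2*(r*x i) + r^2)/(2*σ^2)
        = -r^2/(2*σ^2) + (-‖x‖^2/(2*σ^2)) + -(r * x i / σ^2) from by field_simp; ring]
    rw [Real.exp_add, Real.exp_add, Real.exp_add, Real.exp_add]
    ring
  have hf0 : f 0 = (2*a*Real.exp (-r^2/(2*σ^2))) * n := by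
    rw [hfx 0]
    simp
  constructor
  · -- strict local max
    have hgap : 0 < n/(2*σ^2) - r^2/(2*σ^4) := by
      rw [sub_pos]
      rw [div_lt_div_iff₀ (by positivity) (by positivity)]
      nlinarith
    set δ : ℝ := min (σ^2/r) (Real.sqrt ((n/(2*σ^2) - r^2/(2*σ^4)) * σ^8 / r^4)) with hδdef
    have hδpos : 0 < δ := by
      apply lt_min (by positivity)
      apply Real.sqrt_pos.2 (by positivity)
    refine ⟨Metric.ball 0 δ, Metric.ball_mem_nhds 0 hδpos, ?_⟩
    intro x hx hx0
    rw [mem_ball_zero_iff] at hx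
    set S : ℝ := ‖x‖^2 with hSdef
    have hSpos : 0 < S := pow_pos (norm_pos_iff.2 hx0) 2
    have hsum2 : ∑ i : Fin n, (x i)^2 = S := by
      rw [hSdef, EuclideanSpace.norm_eq, Real.sq_sqrt (by positivity)]
      simp [sq_abs]
    have hxi2 : ∀ i : Fin n, (x i)^2 ≤ S := by
      intro i
      rw [← hsum2]
      exact Finset.single_le_sum (f := fun j : Fin n => (x j)^2) (fun j _ => sq_nonneg _) (Finset.mem_univ i)
    have hSδ : S < δ^2 := by
      rw [hSdef]
      exact pow_lt_pow_left₀ hx (norm_nonneg x) two_ne_zero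
    have hδ1 : δ ≤ σ^2/r := min_le_left _ _
    have hδ2 : δ^2 ≤ (n/(2*σ^2) - r^2/(2*σ^4)) * σ^8 / r^4 := by
      have := min_le_right (σ^2/r) (Real.sqrt ((n/(2*σ^2) - r^2/(2*σ^4)) * σ^8 / r^4))
      calc δ^2 ≤ (Real.sqrt ((n/(2*σ^2) - r^2/(2*σ^4)) * σ^8 / r^4))^2 := by
            apply pow_le_pow_left₀ hδpos.le this
        _ = _ := Real.sq_sqrt (by positivity)
    -- bound each cosh
    have hcosh : ∀ i : Fin n, Real.cosh (r * x i / σ^2) ≤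
        1 + (r^2/(2*σ^4)) * (x i)^2 + (r^4/σ^8) * ((x i)^2)^2 := by
      intro i
      have habsi : |x i| ≤ ‖x‖ := by
        rw [← Real.sqrt_sq_eq_abs, ← Real.sqrt_sq (norm_nonneg x)]
        exact Real.sqrt_le_sqrt (hxi2 i)
      have ht1 : |r * x i / σ^2| ≤ 1 := by
        have heq : |r * x i / σ^2| = r * |x i| / σ^2 := by
          rw [abs_div, abs_mul, abs_of_pos hr, abs_of_pos (by positivity : (0:ℝ) < σ^2)]
        rw [heq, div_le_one (by positivity)]
        have h1 : |x i| ≤ δ := le_trans habsi hx.le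
        calc r * |x i| ≤ r * δ := by nlinarith
          _ ≤ r * (σ^2/r) := by nlinarith
          _ = σ^2 := by field_simp
      have := cosh_bound' (r * x i / σ^2) ht1
      calc Real.cosh (r * x i / σ^2) ≤ 1 + (r * x i / σ^2)^2/2 + (r * x i / σ^2)^4 := this
        _ = 1 + (r^2/(2*σ^4)) * (x i)^2 + (r^4/σ^8) * ((x i)^2)^2 := by ring
    have hsum4 : ∑ i : Fin n, ((x i)^2)^2 ≤ S^2 := by
      calc ∑ i : Fin n, ((x i)^2)^2 ≤ ∑ i : Fin n, (x i)^2 * S := by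
            apply Finset.sum_le_sum
            intro i _
            have := hxi2 i
            nlinarith [sq_nonneg (x i)]
        _ = S * S := by rw [← Finset.sum_mul, hsum2]
        _ = S^2 := by ring
    have hsumcosh : ∑ i : Fin n, Real.cosh (r * x i / σ^2) <
        (n:ℝ) * Real.exp (S/(2*σ^2)) := by
      have h1 : ∑ i : Fin n, Real.cosh (r * x i / σ^2) ≤
          (n:ℝ) + (r^2/(2*σ^4)) * S + (r^4/σ^8) * S^2 := by
        calc ∑ i : Fin n, Real.cosh (r * x i / σ^2)
            ≤ ∑ i : Fin n, (1 + (r^2/(2*σ^4)) * (x i)^2 + (r^4/σ^8) * ((x i)^2)^2) :=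
              Finset.sum_le_sum (fun i _ => hcosh i)
          _ = (n:ℝ) + (r^2/(2*σ^4)) * (∑ i : Fin n, (x i)^2)
              + (r^4/σ^8) * (∑ i : Fin n, ((x i)^2)^2) := by
              rw [Finset.sum_add_distrib, Finset.sum_add_distrib, ← Finset.mul_sum,
                ← Finset.mul_sum]
              simp
          _ ≤ (n:ℝ) + (r^2/(2*σ^4)) * S + (r^4/σ^8) * S^2 := by
              rw [hsum2]
              have : (r^4/σ^8) * (∑ i : Fin n, ((x i)^2)^2) ≤ (r^4/σ^8) * S^2 :=
                mul_le_mul_of_nonneg_left hsum4 (by positivity)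
              linarith
      have h2 : (n:ℝ) + (r^2/(2*σ^4)) * S + (r^4/σ^8) * S^2 < (n:ℝ) + (n/(2*σ^2)) * S := by
        have hS2 : S < (n/(2*σ^2) - r^2/(2*σ^4)) * σ^8 / r^4 := lt_of_lt_of_le hSδ hδ2
        have hmul := mul_lt_mul_of_pos_left hS2 (show (0:ℝ) < r^4/σ^8 by positivity)
        have heq : r^4/σ^8 * ((n/(2*σ^2) - r^2/(2*σ^4)) * σ^8 / r^4)
            = n/(2*σ^2) - r^2/(2*σ^4) := by field_simp
        rw [heq] at hmul
        nlinarith [hSpos]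
      have h3 : (n:ℝ) + (n/(2*σ^2)) * S ≤ (n:ℝ) * Real.exp (S/(2*σ^2)) := by
        have h := Real.add_one_le_exp (S/(2*σ^2))
        have h' := mul_le_mul_of_nonneg_left h hn'.le
        calc (n:ℝ) + (n/(2*σ^2)) * S = n * (S/(2*σ^2) + 1) := by ring
          _ ≤ n * Real.exp (S/(2*σ^2)) := h'
      linarith
    rw [hfx x, hf0]
    apply mul_lt_mul_of_pos_left _ (by positivity)
    have hkey : Real.exp (-S/(2*σ^2)) * (∑ i : Fin n, Real.cosh (r * x i / σ^2)) <
        Real.exp (-S/(2*σ^2)) * ((n:ℝ) * Real.exp (S/(2*σ^2))) :=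
      mul_lt_mul_of_pos_left hsumcosh (Real.exp_pos _)
    have hcancel : Real.exp (-S/(2*σ^2)) * ((n:ℝ) * Real.exp (S/(2*σ^2))) = n := by
      rw [mul_comm ((n:ℝ)) _, ← mul_assoc, ← Real.exp_add]
      rw [show -S/(2*σ^2) + S/(2*σ^2) = 0 from by ring, Real.exp_zero, one_mul]
    rw [hcancel] at hkey
    exact hkey
  · -- distances
    intro i
    have h1 : dist (0 : EuclideanSpace ℝ (Fin n)) (r • EuclideanSpace.single i (1:ℝ)) = r := by
      rw [dist_zero_left, norm_smul]
      simp [abs_of_pos hr]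
    constructor
    · exact h1
    · rw [dist_zero_left, norm_neg, ← dist_zero_left]
      exact h1
end

section
/- The bound of the mode-location theorem cannot be improved by a global constant: for every n ≥ 1, every σ > 0, and every δ > 0, there exists a Gaussian mixture model f on ℝ^n (all of whose components are spherical with common variance σ^2, so that σ_{m,max} = σ_{m,min} = σ for every component m) and a local maximum x' of f such that |x' − x_m| > √n · σ_{m,max}^2 · σ_{m,min}^{−1} − δ = √n·σ − δ for every mean vector x_m of f. -/
open MeasureTheory Matrix Real

lemma gmm_aux_1d (σ r t : ℝ) (hσ : 0 < σ) (hr0 : 0 ≤ r) (hrσ : r ≤ σ) :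
    Real.exp (-(t - r) ^ 2 / (2 * σ ^ 2)) + Real.exp (-(t + r) ^ 2 / (2 * σ ^ 2))
      ≤ 2 * Real.exp (-r ^ 2 / (2 * σ ^ 2)) := by
  have hσ2 : (0:ℝ) < σ ^ 2 := by positivity
  have h1 : -(t - r) ^ 2 / (2 * σ ^ 2)
      = (-(t ^ 2 + r ^ 2) / (2 * σ ^ 2)) + t * r / σ ^ 2 := by
    field_simp; ring
  have h2 : -(t + r) ^ 2 / (2 * σ ^ 2)
      = (-(t ^ 2 + r ^ 2) / (2 * σ ^ 2)) + -(t * r / σ ^ 2) := by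
    field_simp; ring
  rw [h1, h2, Real.exp_add, Real.exp_add, ← mul_add]
  have hcosh : Real.exp (t * r / σ ^ 2) + Real.exp (-(t * r / σ ^ 2))
      = 2 * Real.cosh (t * r / σ ^ 2) := by rw [Real.cosh_eq]; ring
  rw [hcosh]
  have hb : Real.cosh (t * r / σ ^ 2) ≤ Real.exp ((t * r / σ ^ 2) ^ 2 / 2) :=
    Real.cosh_le_exp_half_sq _
  have hr2 : r ^ 2 ≤ σ ^ 2 := by nlinarith
  calc Real.exp (-(t ^ 2 + r ^ 2) / (2 * σ ^ 2)) * (2 * Real.cosh (t * r / σ ^ 2))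
      ≤ Real.exp (-(t ^ 2 + r ^ 2) / (2 * σ ^ 2)) *
        (2 * Real.exp ((t * r / σ ^ 2) ^ 2 / 2)) := by
        have := Real.exp_pos (-(t ^ 2 + r ^ 2) / (2 * σ ^ 2))
        nlinarith
    _ = 2 * Real.exp (-(t ^ 2 + r ^ 2) / (2 * σ ^ 2) + (t * r / σ ^ 2) ^ 2 / 2) := by
        rw [Real.exp_add]; ring
    _ ≤ 2 * Real.exp (-r ^ 2 / (2 * σ ^ 2)) := by
        have hX : (t * r / σ ^ 2) ^ 2 / 2 ≤ t ^ 2 / (2 * σ ^ 2) := by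
          rw [div_pow, div_div, div_le_div_iff₀ (by positivity) (by positivity)]
          nlinarith [mul_le_mul_of_nonneg_left hr2 (mul_nonneg (sq_nonneg t) hσ2.le)]
        have key : -(t ^ 2 + r ^ 2) / (2 * σ ^ 2) + (t * r / σ ^ 2) ^ 2 / 2
            ≤ -r ^ 2 / (2 * σ ^ 2) := by
          have he : -(t ^ 2 + r ^ 2) / (2 * σ ^ 2)
              = -(t ^ 2) / (2 * σ ^ 2) + -(r ^ 2) / (2 * σ ^ 2) := by ring
          rw [he]
          have h0 : -(t ^ 2) / (2 * σ ^ 2) + t ^ 2 / (2 * σ ^ 2) = 0 := by ring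
          linarith
        have := Real.exp_le_exp.2 key
        linarith

lemma gmm_norm_sq (n : ℕ) (y : EuclideanSpace ℝ (Fin n)) : ‖y‖ ^ 2 = ∑ i, (y i) ^ 2 := by
  rw [EuclideanSpace.norm_eq, Real.sq_sqrt (by positivity)]
  simp [sq_abs]

lemma gmm_factor (n : ℕ) (σ r : ℝ)
    (e : Fin (2 ^ n) ≃ Finset (Fin n)) (x : EuclideanSpace ℝ (Fin n)) :
    ∑ m : Fin (2 ^ n), Real.exp (-‖x - (show EuclideanSpace ℝ (Fin n) from
        WithLp.toLp 2 fun i => if i ∈ e m then r else -r)‖ ^ 2 / (2 * σ ^ 2))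
      = ∏ i, (Real.exp (-(x i - r) ^ 2 / (2 * σ ^ 2))
          + Real.exp (-(x i + r) ^ 2 / (2 * σ ^ 2))) := by
  rw [Finset.prod_add, Finset.powerset_univ]
  rw [← Equiv.sum_comp e (fun t : Finset (Fin n) =>
    (∏ i ∈ t, Real.exp (-(x i - r) ^ 2 / (2 * σ ^ 2))) *
      ∏ i ∈ Finset.univ \ t, Real.exp (-(x i + r) ^ 2 / (2 * σ ^ 2)))]
  refine Finset.sum_congr rfl fun m _ => ?_
  set t := e m with ht
  have hc : ∀ i, (show EuclideanSpace ℝ (Fin n) from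
      WithLp.toLp 2 fun i => if i ∈ t then r else -r) i = if i ∈ t then r else -r := fun _ => rfl
  have hsub : ∀ i, (x - (show EuclideanSpace ℝ (Fin n) from
      WithLp.toLp 2 fun i => if i ∈ t then r else -r)) i = x i - (if i ∈ t then r else -r) := by
    intro i; simp [hc]
  rw [gmm_norm_sq]
  have hexp : -(∑ i, ((x - (show EuclideanSpace ℝ (Fin n) from
        WithLp.toLp 2 fun i => if i ∈ t then r else -r)) i) ^ 2) / (2 * σ ^ 2)
      = ∑ i, (-(x i - (if i ∈ t then r else -r)) ^ 2 / (2 * σ ^ 2)) := by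
    rw [neg_div, Finset.sum_div, ← Finset.sum_neg_distrib]
    refine Finset.sum_congr rfl fun i _ => ?_
    rw [hsub i, neg_div]
  rw [hexp, Real.exp_sum]
  rw [← Finset.prod_sdiff (Finset.subset_univ t), mul_comm]
  congr 1
  · refine Finset.prod_congr rfl fun i hi => ?_
    rw [if_pos hi]
  · refine Finset.prod_congr rfl fun i hi => ?_
    rw [if_neg (Finset.mem_sdiff.1 hi).2, sub_neg_eq_add]

/-- **Proposition 3.6.** The bound of the mode-location theorem cannot be improved by a
global constant: for every `n ≥ 1`, `σ > 0` and `δ > 0` there is a (nonempty) Gaussian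
mixture model `f` on `ℝⁿ`, all of whose components are spherical with common variance `σ²`
(so `σ_{m,max} = σ_{m,min} = σ`), together with a local maximum `x'` of `f` such that
`|x' - xm m| > √n * σ² * σ⁻¹ - δ = √n σ - δ` for every mean vector `xm m` of `f`. -/
theorem gmm_mode_distance_bound_sharp (n : ℕ) (hn : 1 ≤ n) (σ δ : ℝ)
    (hσ : 0 < σ) (hδ : 0 < δ) :
    ∃ (M : ℕ) (_ : 0 < M) (a : Fin M → ℝ) (xm : Fin M → EuclideanSpace ℝ (Fin n))
      (f : EuclideanSpace ℝ (Fin n) → ℝ) (x' : EuclideanSpace ℝ (Fin n)),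
      (∀ m, 0 < a m) ∧
      (∀ x, f x = ∑ m, a m * Real.exp (-‖x - xm m‖ ^ 2 / (2 * σ ^ 2))) ∧
      IsLocalMax f x' ∧
      ∀ m : Fin M, Real.sqrt n * σ ^ 2 * σ⁻¹ - δ < dist x' (xm m) := by
  have hn0 : (0:ℝ) < n := by exact_mod_cast hn
  have hsn : 0 < Real.sqrt n := Real.sqrt_pos.2 hn0
  set s := min (δ / (2 * Real.sqrt n)) (σ / 2) with hs
  have hs0 : 0 < s := lt_min (by positivity) (by positivity)
  set r := σ - s with hrdef
  have hr0 : 0 < r := by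
    have := min_le_right (δ / (2 * Real.sqrt n)) (σ / 2)
    rw [hrdef]; rw [hs] at *; linarith
  have hrσ : r ≤ σ := by rw [hrdef]; linarith
  have hcard : Fintype.card (Finset (Fin n)) = 2 ^ n := by
    simp [Fintype.card_finset]
  set e : Fin (2 ^ n) ≃ Finset (Fin n) := (Fintype.equivFinOfCardEq hcard).symm with he
  refine ⟨2 ^ n, pow_pos (by norm_num) n, fun _ => 1,
    fun m => show EuclideanSpace ℝ (Fin n) from WithLp.toLp 2 fun i => if i ∈ e m then r else -r,
    fun x => ∑ m : Fin (2 ^ n), Real.exp (-‖x - (show EuclideanSpace ℝ (Fin n) from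
      WithLp.toLp 2 fun i => if i ∈ e m then r else -r)‖ ^ 2 / (2 * σ ^ 2)),
    0, fun _ => one_pos, fun x => by simp, ?_, ?_⟩
  · -- local max at 0
    refine Filter.Eventually.of_forall fun x => ?_
    show (∑ m : Fin (2 ^ n), Real.exp (-‖x - (show EuclideanSpace ℝ (Fin n) from
        WithLp.toLp 2 fun i => if i ∈ e m then r else -r)‖ ^ 2 / (2 * σ ^ 2)))
      ≤ ∑ m : Fin (2 ^ n), Real.exp (-‖(0 : EuclideanSpace ℝ (Fin n)) -
        (show EuclideanSpace ℝ (Fin n) from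
        WithLp.toLp 2 fun i => if i ∈ e m then r else -r)‖ ^ 2 / (2 * σ ^ 2))
    rw [gmm_factor n σ r e x, gmm_factor n σ r e 0]
    refine Finset.prod_le_prod (fun i _ => by positivity) (fun i _ => ?_)
    have h0 : (0 : EuclideanSpace ℝ (Fin n)) i = 0 := rfl
    rw [h0]
    have h1 := gmm_aux_1d σ r (x i) hσ hr0.le hrσ
    have hz : ((0:ℝ) - r) ^ 2 = r ^ 2 := by ring
    have hz' : ((0:ℝ) + r) ^ 2 = r ^ 2 := by ring
    rw [hz, hz']
    linarith
  · -- distance bound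
    intro m
    have hnorm : ‖(show EuclideanSpace ℝ (Fin n) from
        WithLp.toLp 2 fun i => if i ∈ e m then r else -r)‖ = Real.sqrt n * r := by
      have h2 : ‖(show EuclideanSpace ℝ (Fin n) from
          WithLp.toLp 2 fun i => if i ∈ e m then r else -r)‖ ^ 2 = n * r ^ 2 := by
        rw [gmm_norm_sq]
        have hterm : ∀ i ∈ Finset.univ, ((show EuclideanSpace ℝ (Fin n) from
            WithLp.toLp 2 fun i => if i ∈ e m then r else -r) i) ^ 2 = r ^ 2 := by
          intro i _
          show (if i ∈ e m then r else -r) ^ 2 = r ^ 2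
          split_ifs <;> ring
        rw [Finset.sum_congr rfl hterm]
        simp [Finset.card_univ, mul_comm]
      have := Real.sqrt_sq (norm_nonneg (show EuclideanSpace ℝ (Fin n) from
        WithLp.toLp 2 fun i => if i ∈ e m then r else -r))
      rw [← this, h2, Real.sqrt_mul (by positivity) (r ^ 2), Real.sqrt_sq hr0.le]
    rw [dist_zero_left, hnorm]
    have hσσ : σ ^ 2 * σ⁻¹ = σ := by
      rw [sq, mul_assoc, mul_inv_cancel₀ hσ.ne', mul_one]
    rw [mul_assoc, hσσ]
    have hsle : s ≤ δ / (2 * Real.sqrt n) := min_le_left _ _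
    have hkey : Real.sqrt n * (δ / (2 * Real.sqrt n)) = δ / 2 := by
      field_simp
    have : Real.sqrt n * s ≤ δ / 2 := by
      calc Real.sqrt n * s ≤ Real.sqrt n * (δ / (2 * Real.sqrt n)) :=
        mul_le_mul_of_nonneg_left hsle hsn.le
      _ = δ / 2 := hkey
    have hexpand : Real.sqrt n * r = Real.sqrt n * σ - Real.sqrt n * s := by
      rw [hrdef]; ring
    rw [hexpand]
    linarith
end

section
/- Let u : ℝ^n → ℝ be a twice continuously differentiable, compactly supported, non-negative function such that u and all its partial derivatives up to order two are bounded. Then for every ε > 0 there exists a Gaussian mixture model g, i.e. a finite sum g(x) = Σ_{m=1}^{M} a_m · exp(−(1/2)(x − x_m)^T Σ_m^{−2}(x − x_m)) with non-negative weights a_m ≥ 0, mean vectors x_m ∈ ℝ^n and symmetric positive definite matrices Σ_m, such that the supremum norm satisfies sup_{x ∈ ℝ^n} |u(x) − g(x)| ≤ ε. -/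
open MeasureTheory Matrix Real

open MeasureTheory Matrix Real Metric Set Filter

-- Gaussian kernel facts on EuclideanSpace
lemma gmm_aux_integrable {n : ℕ} {b : ℝ} (hb : 0 < b) :
    Integrable (fun y : EuclideanSpace ℝ (Fin n) => rexp (-b * ‖y‖ ^ 2)) := by
  have h := (GaussianFourier.integrable_cexp_neg_mul_sq_norm_add
    (V := EuclideanSpace ℝ (Fin n)) (b := (b : ℂ)) (by simpa using hb) 0 0).re
  refine h.congr (Filter.Eventually.of_forall fun y => ?_)
  have : -(b:ℂ) * (‖y‖:ℂ)^2 + 0 * (inner ℝ (0 : EuclideanSpace ℝ (Fin n)) y : ℝ)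
      = ((-b * ‖y‖^2 : ℝ) : ℂ) := by push_cast; ring
  simp only [this]
  exact Complex.exp_ofReal_re _

lemma gmm_aux_integral {n : ℕ} {b : ℝ} (hb : 0 < b) :
    ∫ y : EuclideanSpace ℝ (Fin n), rexp (-b * ‖y‖ ^ 2) = (π / b) ^ ((n : ℝ) / 2) := by
  rw [GaussianFourier.integral_rexp_neg_mul_sq_norm hb]
  congr 1
  simp [finrank_euclideanSpace_fin]


-- |exp (-b‖y‖²) - exp (-b‖z‖²)| ≤ √b * ‖y - z‖
lemma gmm_aux_lip {b : ℝ} (hb : 0 < b) {V : Type*} [NormedAddCommGroup V]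
    (y z : V) : |rexp (-b * ‖y‖ ^ 2) - rexp (-b * ‖z‖ ^ 2)| ≤ Real.sqrt b * ‖y - z‖ := by
  have key : ∀ t : ℝ, HasDerivAt (fun t : ℝ => rexp (-b * t ^ 2))
      (rexp (-b * t ^ 2) * (-b * (2 * t))) t := by
    intro t
    have h1 : HasDerivAt (fun t : ℝ => -b * t ^ 2) (-b * (2 * t)) t := by
      simpa using ((hasDerivAt_pow 2 t).const_mul (-b))
    exact h1.exp
  have hdb : ∀ t : ℝ, |rexp (-b * t ^ 2) * (-b * (2 * t))| ≤ Real.sqrt b := by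
    intro t
    rw [abs_mul, abs_of_nonneg (Real.exp_nonneg _)]
    have h2 : |(-b) * (2 * t)| = 2 * b * |t| := by
      rw [abs_mul, abs_neg, abs_of_nonneg hb.le, abs_mul]
      simp [abs_of_nonneg]; ring
    rw [h2]
    -- goal : exp (-b t²) * (2 b |t|) ≤ √b
    have hs : b * t ^ 2 = (Real.sqrt b * |t|) ^ 2 := by
      rw [mul_pow, Real.sq_sqrt hb.le, sq_abs]
    set s := Real.sqrt b * |t| with hsdef
    have hs0 : 0 ≤ s := mul_nonneg (Real.sqrt_nonneg _) (abs_nonneg _)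
    have h3 : 2 * s ≤ Real.exp (s ^ 2) := by
      have := Real.add_one_le_exp (s ^ 2)
      nlinarith [sq_nonneg (s - 1)]
    have hsb : 2 * b * |t| = Real.sqrt b * (2 * s) := by
      have : Real.sqrt b * Real.sqrt b = b := Real.mul_self_sqrt hb.le
      rw [hsdef]; linear_combination (-2*|t|) * this
    rw [hsb, neg_mul, Real.exp_neg, hs]
    calc (Real.exp (s ^ 2))⁻¹ * (Real.sqrt b * (2 * s))
        ≤ (Real.exp (s ^ 2))⁻¹ * (Real.sqrt b * Real.exp (s ^ 2)) := by
          apply mul_le_mul_of_nonneg_left _ (by positivity)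
          exact mul_le_mul_of_nonneg_left h3 (Real.sqrt_nonneg _)
      _ = Real.sqrt b := by
          field_simp
  have hlip : LipschitzWith (Real.sqrt b).toNNReal (fun t : ℝ => rexp (-b * t ^ 2)) := by
    apply lipschitzWith_of_nnnorm_deriv_le (fun t => (key t).differentiableAt)
    intro t
    rw [← NNReal.coe_le_coe, coe_nnnorm, Real.coe_toNNReal _ (Real.sqrt_nonneg _),
      (key t).deriv, Real.norm_eq_abs]
    exact hdb t
  have := (hlip.comp lipschitzWith_one_norm).dist_le_mul y z
  rw [Real.dist_eq] at this
  refine le_trans this (le_of_eq ?_)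
  rw [dist_eq_norm]
  push_cast [Real.coe_toNNReal _ (Real.sqrt_nonneg b)]
  ring


set_option maxHeartbeats 2000000 in
lemma gmm_mix {n : ℕ} (u : EuclideanSpace ℝ (Fin n) → ℝ)
    (hu : ContDiff ℝ 2 u) (hsupp : HasCompactSupport u) (hpos : ∀ x, 0 ≤ u x)
    (hbdd : ∀ k : ℕ, k ≤ 2 → ∃ C : ℝ, ∀ x, ‖iteratedFDeriv ℝ k u x‖ ≤ C)
    (ε : ℝ) (hε : 0 < ε) :
    ∃ (M : ℕ) (a : Fin M → ℝ) (cen : Fin M → EuclideanSpace ℝ (Fin n)) (b : ℝ),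
      0 < b ∧ (∀ m, 0 ≤ a m) ∧
      ∀ x, |u x - ∑ m, a m * Real.exp (-b * ‖x - cen m‖ ^ 2)| ≤ ε := by
  classical
  -- bound on u
  obtain ⟨C0, hC0⟩ := hbdd 0 (by norm_num)
  have hCu : ∀ x, |u x| ≤ C0 := fun x => by
    simpa [norm_iteratedFDeriv_zero, Real.norm_eq_abs] using hC0 x
  have hCu0 : 0 ≤ C0 := le_trans (abs_nonneg _) (hCu 0)
  -- Lipschitz constant of u
  obtain ⟨C1, hC1⟩ := hbdd 1 (by norm_num)
  set L : ℝ := max C1 0 with hLdef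
  have hL0 : 0 ≤ L := le_max_right _ _
  have hulip : ∀ x y, |u x - u y| ≤ L * ‖x - y‖ := by
    have hlip : LipschitzWith L.toNNReal u := by
      apply lipschitzWith_of_nnnorm_fderiv_le (hu.differentiable (by norm_num))
      intro x
      rw [← NNReal.coe_le_coe, coe_nnnorm, Real.coe_toNNReal _ hL0]
      calc ‖fderiv ℝ u x‖ = ‖iteratedFDeriv ℝ 1 u x‖ := by
            rw [← norm_iteratedFDeriv_fderiv, norm_iteratedFDeriv_zero]
        _ ≤ C1 := hC1 x
        _ ≤ L := le_max_left _ _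
    intro x y
    have h := hlip.dist_le_mul x y
    rw [Real.dist_eq, dist_eq_norm, Real.coe_toNNReal _ hL0] at h
    exact h
  -- radius
  set r : ℝ := ε / (8 * (L + 1)) with hrdef
  have hr0 : 0 < r := by rw [hrdef]; positivity
  have hLr : L * r ≤ ε / 8 := by
    have h1 : L ≤ L + 1 := by linarith
    calc L * r ≤ (L + 1) * r := mul_le_mul_of_nonneg_right h1 hr0.le
      _ = ε / 8 := by rw [hrdef]; field_simp
  -- choice of b
  set A : ℝ := 2 * C0 * 2 ^ ((n : ℝ) / 2) with hAdef
  have hA0 : 0 ≤ A := by positivity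
  obtain ⟨b, hbig, hb⟩ :
      ∃ b : ℝ, A * Real.exp (-(b / 2) * r ^ 2) ≤ ε / 8 ∧ 0 < b := by
    have h1 : Tendsto (fun b : ℝ => -(b / 2) * r ^ 2) atTop atBot := by
      have : ∀ b : ℝ, -(b / 2) * r ^ 2 = b * (-(r ^ 2) / 2) := fun b => by ring
      simp only [this]
      exact Tendsto.atTop_mul_const_of_neg (by nlinarith) tendsto_id
    have h2 : Tendsto (fun b : ℝ => A * Real.exp (-(b / 2) * r ^ 2)) atTop (nhds 0) := by
      have := (Real.tendsto_exp_atBot.comp h1).const_mul A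
      simpa using this
    exact ((h2.eventually (ge_mem_nhds (by positivity : (0:ℝ) < ε / 8))).and
      (eventually_gt_atTop 0)).exists
  -- kernel
  set I : ℝ := (π / b) ^ ((n : ℝ) / 2) with hIdef
  have hI0 : 0 < I := Real.rpow_pos_of_pos (by positivity) _
  set c : ℝ := I⁻¹ with hcdef
  have hc0 : 0 < c := by rw [hcdef]; positivity
  set k : EuclideanSpace ℝ (Fin n) → ℝ := fun y => c * Real.exp (-b * ‖y‖ ^ 2) with hkdef
  have hkint : Integrable k := (gmm_aux_integrable hb).const_mul c
  have hk1 : ∫ y, k y = 1 := by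
    rw [hkdef]
    simp only [integral_const_mul]
    rw [gmm_aux_integral hb, hcdef, hIdef]
    field_simp
  have hknn : ∀ y, 0 ≤ k y := fun y => by rw [hkdef]; positivity
  have hkcont : Continuous k := by
    rw [hkdef]
    exact continuous_const.mul (Real.continuous_exp.comp
      ((continuous_const.mul ((continuous_norm).pow 2))))
  have hucont : Continuous u := hu.continuous
  have huint : Integrable u := hucont.integrable_of_hasCompactSupport hsupp
  -- tail bound
  set s : Set (EuclideanSpace ℝ (Fin n)) := Metric.ball 0 r with hsdef
  have hsm : MeasurableSet s := measurableSet_ball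
  have htail : ∫ y in sᶜ, k y ≤ 2 ^ ((n : ℝ) / 2) * Real.exp (-(b / 2) * r ^ 2) := by
    have hint2 : Integrable (fun y : EuclideanSpace ℝ (Fin n) =>
        (c * Real.exp (-(b / 2) * r ^ 2)) * Real.exp (-(b / 2) * ‖y‖ ^ 2)) :=
      (gmm_aux_integrable (half_pos hb)).const_mul _
    have hsub : ∀ y ∈ sᶜ, k y ≤
        (c * Real.exp (-(b / 2) * r ^ 2)) * Real.exp (-(b / 2) * ‖y‖ ^ 2) := by
      intro y hy
      have hyr : r ≤ ‖y‖ := by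
        simpa [hsdef, Metric.mem_ball, dist_zero_right, not_lt] using hy
      have hsplit : Real.exp (-b * ‖y‖ ^ 2)
          = Real.exp (-(b / 2) * ‖y‖ ^ 2) * Real.exp (-(b / 2) * ‖y‖ ^ 2) := by
        rw [← Real.exp_add]; ring_nf
      have h5 : Real.exp (-(b / 2) * ‖y‖ ^ 2) ≤ Real.exp (-(b / 2) * r ^ 2) := by
        apply Real.exp_le_exp.2
        have h6 : r ^ 2 ≤ ‖y‖ ^ 2 := by nlinarith [hr0.le, norm_nonneg y]
        nlinarith [hb.le]
      calc k y = c * (Real.exp (-(b / 2) * ‖y‖ ^ 2) * Real.exp (-(b / 2) * ‖y‖ ^ 2)) := by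
            simp only [hkdef]; rw [hsplit]
        _ ≤ c * (Real.exp (-(b / 2) * r ^ 2) * Real.exp (-(b / 2) * ‖y‖ ^ 2)) := by
            apply mul_le_mul_of_nonneg_left _ hc0.le
            exact mul_le_mul_of_nonneg_right h5 (Real.exp_nonneg _)
        _ = (c * Real.exp (-(b / 2) * r ^ 2)) * Real.exp (-(b / 2) * ‖y‖ ^ 2) := by ring
    calc ∫ y in sᶜ, k y
        ≤ ∫ y in sᶜ, (c * Real.exp (-(b / 2) * r ^ 2)) * Real.exp (-(b / 2) * ‖y‖ ^ 2) :=
          setIntegral_mono_on hkint.integrableOn hint2.integrableOn hsm.compl hsub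
      _ ≤ ∫ y, (c * Real.exp (-(b / 2) * r ^ 2)) * Real.exp (-(b / 2) * ‖y‖ ^ 2) := by
          apply setIntegral_le_integral hint2
          exact Filter.Eventually.of_forall fun y => by positivity
      _ = (c * Real.exp (-(b / 2) * r ^ 2)) * (π / (b / 2)) ^ ((n : ℝ) / 2) := by
          rw [integral_const_mul, gmm_aux_integral (half_pos hb)]
      _ = 2 ^ ((n : ℝ) / 2) * Real.exp (-(b / 2) * r ^ 2) := by
          have hpb : π / (b / 2) = 2 * (π / b) := by
            field_simp
          rw [hpb, Real.mul_rpow (by norm_num) (by positivity), hcdef, hIdef]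
          field_simp
  -- Claim A : convolution approximates u
  have hconv : ∀ x, |u x - ∫ y, u y * k (x - y)| ≤ ε / 4 := by
    intro x
    have hmble : AEStronglyMeasurable (fun y : EuclideanSpace ℝ (Fin n) => u (x - y)) volume :=
      (hucont.comp (continuous_const.sub continuous_id)).aestronglyMeasurable
    have hint1 : Integrable (fun y => u (x - y) * k y) :=
      hkint.bdd_mul hmble (Eventually.of_forall fun y => by simpa [Real.norm_eq_abs] using hCu (x - y))
    have hint0 : Integrable (fun y => u x * k y) := hkint.const_mul _
    have hintd : Integrable (fun y => (u x - u (x - y)) * k y) := by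
      have := hint0.sub hint1
      refine this.congr (Eventually.of_forall fun y => ?_)
      simp only [Pi.sub_apply]
      ring
    have hchg : (∫ y, u y * k (x - y)) = ∫ y, u (x - y) * k y := by
      have h9 := integral_sub_left_eq_self (fun y => u (x - y) * k y) volume x
      simp only [sub_sub_cancel] at h9
      exact h9
    have hsubint : u x - (∫ y, u y * k (x - y)) = ∫ y, (u x - u (x - y)) * k y := by
      have h10 : ∫ y, (u x - u (x - y)) * k y
          = (∫ y, u x * k y) - ∫ y, u (x - y) * k y := by
        rw [← integral_sub hint0 hint1]
        congr 1; funext y; ring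
      rw [hchg, h10, integral_const_mul, hk1, mul_one]
    rw [hsubint]
    have hnorm : |∫ y, (u x - u (x - y)) * k y| ≤ ∫ y, |(u x - u (x - y)) * k y| := by
      have h12 := norm_integral_le_integral_norm (μ := volume)
        (fun y => (u x - u (x - y)) * k y)
      simpa only [Real.norm_eq_abs] using h12
    have hsplitint : (∫ y, |(u x - u (x - y)) * k y|)
        = (∫ y in s, |(u x - u (x - y)) * k y|) + ∫ y in sᶜ, |(u x - u (x - y)) * k y| :=
      (integral_add_compl hsm hintd.abs).symm
    have hball : ∫ y in s, |(u x - u (x - y)) * k y| ≤ L * r := by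
      have hmono : ∀ y ∈ s, |(u x - u (x - y)) * k y| ≤ (L * r) * k y := by
        intro y hy
        have hyr : ‖y‖ < r := by simpa [hsdef, mem_ball, dist_zero_right] using hy
        rw [abs_mul, abs_of_nonneg (hknn y)]
        apply mul_le_mul_of_nonneg_right _ (hknn y)
        calc |u x - u (x - y)| ≤ L * ‖x - (x - y)‖ := hulip _ _
          _ = L * ‖y‖ := by rw [sub_sub_cancel]
          _ ≤ L * r := mul_le_mul_of_nonneg_left hyr.le hL0
      calc ∫ y in s, |(u x - u (x - y)) * k y| ≤ ∫ y in s, (L * r) * k y :=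
          setIntegral_mono_on hintd.abs.integrableOn (hkint.const_mul _).integrableOn hsm hmono
        _ = (L * r) * ∫ y in s, k y := integral_const_mul _ _
        _ ≤ (L * r) * 1 := by
            apply mul_le_mul_of_nonneg_left _ (by positivity)
            rw [← hk1]
            exact setIntegral_le_integral hkint (Eventually.of_forall hknn)
        _ = L * r := mul_one _
    have hcompl : ∫ y in sᶜ, |(u x - u (x - y)) * k y|
        ≤ (2 * C0) * (2 ^ ((n : ℝ) / 2) * Real.exp (-(b / 2) * r ^ 2)) := by
      have hmono : ∀ y ∈ sᶜ, |(u x - u (x - y)) * k y| ≤ (2 * C0) * k y := by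
        intro y _
        rw [abs_mul, abs_of_nonneg (hknn y)]
        apply mul_le_mul_of_nonneg_right _ (hknn y)
        have h11 : |u x - u (x - y)| ≤ |u x| + |u (x - y)| := by
          rw [sub_eq_add_neg]
          exact (abs_add_le _ _).trans (by rw [abs_neg])
        calc |u x - u (x - y)| ≤ |u x| + |u (x - y)| := h11
          _ ≤ C0 + C0 := add_le_add (hCu x) (hCu (x - y))
          _ = 2 * C0 := by ring
      calc ∫ y in sᶜ, |(u x - u (x - y)) * k y| ≤ ∫ y in sᶜ, (2 * C0) * k y :=
          setIntegral_mono_on hintd.abs.integrableOn (hkint.const_mul _).integrableOn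
            hsm.compl hmono
        _ = (2 * C0) * ∫ y in sᶜ, k y := integral_const_mul _ _
        _ ≤ (2 * C0) * (2 ^ ((n : ℝ) / 2) * Real.exp (-(b / 2) * r ^ 2)) :=
            mul_le_mul_of_nonneg_left htail (by positivity)
    calc |∫ y, (u x - u (x - y)) * k y| ≤ ∫ y, |(u x - u (x - y)) * k y| := hnorm
      _ = _ := hsplitint
      _ ≤ L * r + (2 * C0) * (2 ^ ((n : ℝ) / 2) * Real.exp (-(b / 2) * r ^ 2)) :=
          add_le_add hball hcompl
      _ ≤ ε / 8 + ε / 8 := by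
          apply add_le_add hLr
          calc (2 * C0) * (2 ^ ((n : ℝ) / 2) * Real.exp (-(b / 2) * r ^ 2))
              = A * Real.exp (-(b / 2) * r ^ 2) := by rw [hAdef]; ring
            _ ≤ ε / 8 := hbig
      _ ≤ ε / 4 := by linarith
  -- partition of the support
  set K : Set (EuclideanSpace ℝ (Fin n)) := tsupport u with hKdef
  have hKc : IsCompact K := hsupp
  have hKm : MeasurableSet K := (isClosed_tsupport u).measurableSet
  have hIKu : 0 ≤ ∫ y in K, u y := setIntegral_nonneg hKm fun y _ => hpos y
  set X : ℝ := c * Real.sqrt b * ∫ y in K, u y with hXdef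
  have hX0 : 0 ≤ X :=
    mul_nonneg (mul_nonneg hc0.le (Real.sqrt_nonneg _)) hIKu
  set δ : ℝ := (ε / 2) / (X + 1) with hδdef
  have hδ0 : 0 < δ := by
    rw [hδdef]; apply div_pos (by linarith) (by linarith)
  obtain ⟨t, ht⟩ := hKc.elim_finite_subcover
    (fun p : EuclideanSpace ℝ (Fin n) => ball p δ) (fun p => isOpen_ball)
    (fun y hy => mem_iUnion.2 ⟨y, mem_ball_self hδ0⟩)
  set M := t.card with hMdef
  set cen : Fin M → EuclideanSpace ℝ (Fin n) := fun i => (t.equivFin.symm i : _) with hcendef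
  set W : ℕ → Set (EuclideanSpace ℝ (Fin n)) :=
    fun j => if h : j < M then K ∩ ball (cen ⟨j, h⟩) δ else ∅ with hWdef
  have hWm : ∀ j, MeasurableSet (W j) := by
    intro j
    rw [hWdef]; dsimp only
    split
    · exact hKm.inter measurableSet_ball
    · exact MeasurableSet.empty
  have hWK : ∀ j, W j ⊆ K := by
    intro j
    rw [hWdef]; dsimp only
    split
    · exact inter_subset_left
    · exact empty_subset _
  have hWunion : (⋃ j, W j) = K := by
    apply subset_antisymm (iUnion_subset hWK)
    intro y hy
    have h13 := ht hy
    rw [mem_iUnion₂] at h13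
    obtain ⟨p, hp, hyp⟩ := h13
    refine mem_iUnion.2 ⟨(t.equivFin ⟨p, hp⟩ : Fin M).val, ?_⟩
    rw [hWdef]; dsimp only
    rw [dif_pos (t.equivFin ⟨p, hp⟩).isLt]
    have hc14 : cen ⟨(t.equivFin ⟨p, hp⟩).val, (t.equivFin ⟨p, hp⟩).isLt⟩ = p := by
      rw [hcendef]
      simp only [Fin.eta, Equiv.symm_apply_apply]
    rw [hc14]
    exact ⟨hy, hyp⟩
  set Q : ℕ → Set (EuclideanSpace ℝ (Fin n)) := disjointed W with hQdef
  have hQm : ∀ j, MeasurableSet (Q j) := MeasurableSet.disjointed hWm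
  have hQd : Pairwise (Function.onFun Disjoint Q) := disjoint_disjointed W
  have hQW : ∀ j, Q j ⊆ W j := disjointed_subset W
  have hQunion : (⋃ j, Q j) = K := by rw [hQdef, iUnion_disjointed, hWunion]
  have hQempty : ∀ j, M ≤ j → Q j = ∅ := by
    intro j hj
    refine subset_empty_iff.1 ?_
    refine (hQW j).trans ?_
    rw [hWdef]; dsimp only
    rw [dif_neg (not_lt.2 hj)]
  have husum : ∀ f : EuclideanSpace ℝ (Fin n) → ℝ, Integrable f →
      ∫ y in K, f y = ∑ j ∈ Finset.range M, ∫ y in Q j, f y := by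
    intro f hf
    rw [← hQunion, integral_iUnion hQm hQd hf.integrableOn]
    refine tsum_eq_sum fun j hj => ?_
    rw [hQempty j (not_lt.1 fun h => hj (Finset.mem_range.2 h)), setIntegral_empty]
  -- the mixture
  refine ⟨M, (fun i => c * ∫ y in Q i, u y), cen, b, hb,
    (fun i => mul_nonneg hc0.le (setIntegral_nonneg (hQm _) fun y _ => hpos y)), ?_⟩
  intro x
  have hkxcont : Continuous fun y => k (x - y) :=
    hkcont.comp (continuous_const.sub continuous_id)
  have hfx_int : Integrable (fun y => u y * k (x - y)) := by
    apply (hucont.mul hkxcont).integrable_of_hasCompactSupport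
    exact hsupp.mul_right
  have hKint : (∫ y, u y * k (x - y)) = ∫ y in K, u y * k (x - y) :=
    (setIntegral_eq_integral_of_forall_compl_eq_zero fun y hy => by
      rw [image_eq_zero_of_notMem_tsupport hy, zero_mul]).symm
  -- termwise comparison
  have hterm : ∀ i : Fin M,
      |(∫ y in Q i.val, u y * k (x - y))
          - (c * ∫ y in Q i.val, u y) * Real.exp (-b * ‖x - cen i‖ ^ 2)|
        ≤ (c * Real.sqrt b * δ) * ∫ y in Q i.val, u y := by
    intro i
    have hQball : Q i.val ⊆ ball (cen i) δ := by
      refine (hQW i.val).trans ?_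
      rw [hWdef]; dsimp only
      rw [dif_pos i.isLt]
      simp only [Fin.eta]
      exact inter_subset_right
    have huQ : IntegrableOn u (Q i.val) := huint.integrableOn
    have h8 : (c * ∫ y in Q i.val, u y) * Real.exp (-b * ‖x - cen i‖ ^ 2)
        = ∫ y in Q i.val, u y * (c * Real.exp (-b * ‖x - cen i‖ ^ 2)) := by
      rw [integral_mul_const]; ring
    rw [h8, ← integral_sub hfx_int.integrableOn (huQ.mul_const _)]
    have hptwise : ∀ y ∈ Q i.val,
        |u y * k (x - y) - u y * (c * Real.exp (-b * ‖x - cen i‖ ^ 2))|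
          ≤ u y * (c * Real.sqrt b * δ) := by
      intro y hy
      have hydist : ‖y - cen i‖ < δ := by
        have := hQball hy
        rwa [mem_ball, dist_eq_norm] at this
      have h15 : |k (x - y) - c * Real.exp (-b * ‖x - cen i‖ ^ 2)|
          ≤ c * Real.sqrt b * δ := by
        have h16 : k (x - y) - c * Real.exp (-b * ‖x - cen i‖ ^ 2)
            = c * (Real.exp (-b * ‖x - y‖ ^ 2) - Real.exp (-b * ‖x - cen i‖ ^ 2)) := by
          simp only [hkdef]; ring
        rw [h16, abs_mul, abs_of_nonneg hc0.le]
        have h17 := gmm_aux_lip hb (x - y) (x - cen i)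
        have h18 : (x - y) - (x - cen i) = cen i - y := by abel
        rw [h18] at h17
        have h19 : ‖cen i - y‖ < δ := by rwa [norm_sub_rev]
        calc c * |Real.exp (-b * ‖x - y‖ ^ 2) - Real.exp (-b * ‖x - cen i‖ ^ 2)|
            ≤ c * (Real.sqrt b * ‖cen i - y‖) := mul_le_mul_of_nonneg_left h17 hc0.le
          _ ≤ c * (Real.sqrt b * δ) := by
              apply mul_le_mul_of_nonneg_left _ hc0.le
              exact mul_le_mul_of_nonneg_left h19.le (Real.sqrt_nonneg _)
          _ = c * Real.sqrt b * δ := by ring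
      calc |u y * k (x - y) - u y * (c * Real.exp (-b * ‖x - cen i‖ ^ 2))|
          = |u y| * |k (x - y) - c * Real.exp (-b * ‖x - cen i‖ ^ 2)| := by
            rw [← abs_mul]; congr 1; ring
        _ ≤ |u y| * (c * Real.sqrt b * δ) :=
            mul_le_mul_of_nonneg_left h15 (abs_nonneg _)
        _ = u y * (c * Real.sqrt b * δ) := by rw [abs_of_nonneg (hpos y)]
    have hdiffint : IntegrableOn
        (fun y => u y * k (x - y) - u y * (c * Real.exp (-b * ‖x - cen i‖ ^ 2)))
        (Q i.val) := hfx_int.integrableOn.sub (huQ.mul_const _)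
    have h20 := norm_integral_le_integral_norm (μ := volume.restrict (Q i.val))
      (fun y => u y * k (x - y) - u y * (c * Real.exp (-b * ‖x - cen i‖ ^ 2)))
    simp only [Real.norm_eq_abs] at h20
    refine h20.trans ?_
    calc ∫ y in Q i.val, |u y * k (x - y) - u y * (c * Real.exp (-b * ‖x - cen i‖ ^ 2))|
        ≤ ∫ y in Q i.val, u y * (c * Real.sqrt b * δ) :=
          setIntegral_mono_on hdiffint.abs (huQ.mul_const _) (hQm _) hptwise
      _ = (c * Real.sqrt b * δ) * ∫ y in Q i.val, u y := by
          rw [integral_mul_const]; ring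
  -- sum up
  have hsumQ : (∫ y, u y * k (x - y)) = ∑ i : Fin M, ∫ y in Q i.val, u y * k (x - y) := by
    rw [hKint, husum _ hfx_int, Fin.sum_univ_eq_sum_range (fun j => ∫ y in Q j, u y * k (x - y))]
  have hsumu : (∫ y in K, u y) = ∑ i : Fin M, ∫ y in Q i.val, u y := by
    rw [husum _ huint, Fin.sum_univ_eq_sum_range (fun j => ∫ y in Q j, u y)]
  have hB : |(∫ y, u y * k (x - y))
      - ∑ i : Fin M, (c * ∫ y in Q i.val, u y) * Real.exp (-b * ‖x - cen i‖ ^ 2)| ≤ ε / 2 := by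
    rw [hsumQ, ← Finset.sum_sub_distrib]
    calc |∑ i : Fin M, ((∫ y in Q i.val, u y * k (x - y))
            - (c * ∫ y in Q i.val, u y) * Real.exp (-b * ‖x - cen i‖ ^ 2))|
        ≤ ∑ i : Fin M, |(∫ y in Q i.val, u y * k (x - y))
            - (c * ∫ y in Q i.val, u y) * Real.exp (-b * ‖x - cen i‖ ^ 2)| :=
          Finset.abs_sum_le_sum_abs _ _
      _ ≤ ∑ i : Fin M, (c * Real.sqrt b * δ) * ∫ y in Q i.val, u y :=
          Finset.sum_le_sum fun i _ => hterm i
      _ = (c * Real.sqrt b * δ) * ∑ i : Fin M, ∫ y in Q i.val, u y := by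
          rw [Finset.mul_sum]
      _ = X * δ := by rw [hXdef, ← hsumu]; ring
      _ ≤ (X + 1) * δ := by nlinarith
      _ = ε / 2 := by
          rw [hδdef]
          field_simp
  calc |u x - ∑ i : Fin M, (c * ∫ y in Q i.val, u y) * Real.exp (-b * ‖x - cen i‖ ^ 2)|
      ≤ |u x - ∫ y, u y * k (x - y)|
        + |(∫ y, u y * k (x - y))
            - ∑ i : Fin M, (c * ∫ y in Q i.val, u y) * Real.exp (-b * ‖x - cen i‖ ^ 2)| :=
        abs_sub_le _ _ _
    _ ≤ ε / 4 + ε / 2 := add_le_add (hconv x) hB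
    _ ≤ ε := by linarith

/-- **Proposition 3.7.** Let `u : ℝⁿ → ℝ` be twice continuously differentiable, compactly
supported and non-negative, with `u` and all its partial derivatives up to order two
bounded. Then for every `ε > 0` there is a Gaussian mixture model
`g(x) = ∑ m, a m * exp(-(1/2) (x - xm m)ᵀ (Σ m)⁻² (x - xm m))` with non-negative weights
and symmetric positive definite matrices `Σ m` such that `sup_x |u x - g x| ≤ ε`. -/
theorem gmm_uniform_approximation (n : ℕ) (u : EuclideanSpace ℝ (Fin n) → ℝ)
    (hu : ContDiff ℝ 2 u) (hsupp : HasCompactSupport u) (hpos : ∀ x, 0 ≤ u x)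
    (hbdd : ∀ k : ℕ, k ≤ 2 → ∃ C : ℝ, ∀ x, ‖iteratedFDeriv ℝ k u x‖ ≤ C)
    (ε : ℝ) (hε : 0 < ε) :
    ∃ (M : ℕ) (a : Fin M → ℝ) (xm : Fin M → EuclideanSpace ℝ (Fin n))
      (S : Fin M → Matrix (Fin n) (Fin n) ℝ),
      (∀ m, 0 ≤ a m) ∧ (∀ m, (S m).PosDef) ∧
      ∀ x, |u x - ∑ m, a m *
        Real.exp (-(1/2) * ((fun i => x i - xm m i) ⬝ᵥ
          ((S m ^ 2)⁻¹).mulVec fun i => x i - xm m i))| ≤ ε := by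
  classical
  obtain ⟨M, a, cen, b, hb, ha, happrox⟩ := gmm_mix u hu hsupp hpos hbdd ε hε
  set σ : ℝ := (Real.sqrt (2 * b))⁻¹ with hσdef
  have hσ0 : 0 < σ := by
    rw [hσdef]; exact inv_pos.2 (Real.sqrt_pos.2 (by linarith))
  have hσsq : (σ ^ 2)⁻¹ = 2 * b := by
    rw [hσdef, ← inv_pow, inv_inv, Real.sq_sqrt (by linarith)]
  refine ⟨M, a, cen, fun _ => Matrix.diagonal (fun _ => σ), ha,
    fun m => Matrix.posDef_diagonal_iff.2 fun _ => hσ0, ?_⟩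
  intro x
  have hinv : ((Matrix.diagonal fun _ : Fin n => σ) ^ 2)⁻¹
      = Matrix.diagonal (fun _ : Fin n => (σ ^ 2)⁻¹) := by
    rw [Matrix.diagonal_pow]
    apply Matrix.inv_eq_right_inv
    rw [Matrix.diagonal_mul_diagonal, ← Matrix.diagonal_one]
    congr 1
    funext i
    simp only [Pi.mul_apply, Pi.pow_apply, Pi.one_apply]
    field_simp
  have hmain : ∀ m : Fin M,
      a m * Real.exp (-(1/2) * ((fun i => x i - cen m i) ⬝ᵥ
        (((Matrix.diagonal fun _ : Fin n => σ) ^ 2)⁻¹).mulVec fun i => x i - cen m i))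
      = a m * Real.exp (-b * ‖x - cen m‖ ^ 2) := by
    intro m
    congr 2
    rw [hinv]
    have hdot : ((fun i => x i - cen m i) ⬝ᵥ
        (Matrix.diagonal fun _ : Fin n => (σ ^ 2)⁻¹).mulVec fun i => x i - cen m i)
        = (σ ^ 2)⁻¹ * ∑ i, (x i - cen m i) ^ 2 := by
      simp only [dotProduct, Matrix.mulVec_diagonal, Finset.mul_sum]
      exact Finset.sum_congr rfl fun i _ => by ring
    have hnorm : ‖x - cen m‖ ^ 2 = ∑ i, (x i - cen m i) ^ 2 := by
      rw [EuclideanSpace.norm_eq, Real.sq_sqrt (Finset.sum_nonneg fun i _ => sq_nonneg _)]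
      exact Finset.sum_congr rfl fun i _ => by
        simp [Real.norm_eq_abs, sq_abs]
    rw [hdot, hσsq, hnorm]
    ring
  calc |u x - ∑ m, a m * Real.exp (-(1/2) * ((fun i => x i - cen m i) ⬝ᵥ
        (((Matrix.diagonal fun _ : Fin n => σ) ^ 2)⁻¹).mulVec fun i => x i - cen m i))|
      = |u x - ∑ m, a m * Real.exp (-b * ‖x - cen m‖ ^ 2)| := by
        rw [Finset.sum_congr rfl fun m _ => hmain m]
    _ ≤ ε := happrox x
end

section
/- Let f(x) = Σ_{m=1}^{M} a_m · exp(−|x − x_m|^2/(2σ^2)) be a mixture of spherical Gaussians on ℝ^n with common variance σ^2 > 0 and weights a_m > 0. If x' is a local maximum of f, then the Euclidean distance from x' to the finite set of mean vectors {x_1, …, x_M} is at most √n·σ, i.e. min_{1 ≤ m ≤ M} |x' − x_m| ≤ √n·σ. -/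
open MeasureTheory Matrix Real Filter

/-- If `φ` is differentiable with derivative `φ'`, and `φ'` has positive derivative at `0`,
then `φ` has no local max at `0`. -/
lemma aux_not_isLocalMax {φ φ' : ℝ → ℝ} (hd : ∀ t, HasDerivAt φ (φ' t) t)
    {L : ℝ} (hL : HasDerivAt φ' L 0) (hLpos : 0 < L) : ¬ IsLocalMax φ 0 := by
  intro hmax
  have h0 : φ' 0 = 0 := hmax.hasDerivAt_eq_zero (hd 0)
  have hslope : Tendsto (slope φ' 0) (nhdsWithin 0 {(0:ℝ)}ᶜ) (nhds L) :=
    hasDerivAt_iff_tendsto_slope.mp hL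
  have hev : ∀ᶠ t in nhdsWithin (0:ℝ) (Set.Ioi 0), 0 < φ' t := by
    have h1 : ∀ᶠ t in nhdsWithin (0:ℝ) {(0:ℝ)}ᶜ, 0 < slope φ' 0 t :=
      hslope.eventually (eventually_gt_nhds hLpos)
    have h2 : ∀ᶠ t in nhdsWithin (0:ℝ) (Set.Ioi 0), 0 < slope φ' 0 t :=
      h1.filter_mono (nhdsWithin_mono 0 (fun t ht => ne_of_gt ht))
    filter_upwards [h2, self_mem_nhdsWithin] with t ht (ht0 : t ∈ Set.Ioi 0)
    have : slope φ' 0 t = φ' t / t := by simp [slope, h0, div_eq_inv_mul]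
    rw [this] at ht
    rcases div_pos_iff.mp ht with ⟨h, _⟩ | ⟨_, h⟩
    · exact h
    · exact absurd ht0.out (not_lt.mpr h.le)
  obtain ⟨ε, hε, hIoo⟩ := mem_nhdsGT_iff_exists_Ioo_subset.mp hev
  obtain ⟨δ, hδ, hball⟩ := Metric.eventually_nhds_iff.mp hmax
  have hεpos : (0:ℝ) < ε := hε
  set r := min ε δ / 2 with hr
  have hm : 0 < min ε δ := lt_min hεpos hδ
  have hrpos : 0 < r := by positivity
  have hrmin : r < min ε δ := by rw [hr]; linarith
  have hrε : r < ε := lt_of_lt_of_le hrmin (min_le_left _ _)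
  have hrδ : r < δ := lt_of_lt_of_le hrmin (min_le_right _ _)
  have hmono : StrictMonoOn φ (Set.Icc 0 r) := by
    apply strictMonoOn_of_deriv_pos (convex_Icc 0 r)
    · exact fun x _ => (hd x).continuousAt.continuousWithinAt
    · intro x hx
      rw [interior_Icc] at hx
      rw [(hd x).deriv]
      exact hIoo ⟨hx.1, lt_trans hx.2 hrε⟩
  have h1 : φ 0 < φ r := hmono ⟨le_refl 0, hrpos.le⟩ ⟨hrpos.le, le_refl r⟩ hrpos
  have h2 : φ r ≤ φ 0 := hball (by simpa [abs_of_pos hrpos] using hrδ)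
  linarith

/-- The key one-dimensional computation: a Gaussian mixture restricted to a line has no
local max at `0` if the "second derivative" expression is positive. -/
lemma aux_gauss_line {M : ℕ} (σ : ℝ) (hσ : 0 < σ) (a c b : Fin M → ℝ)
    (hpos : 0 < ∑ m, a m * Real.exp (-(c m) / (2 * σ ^ 2)) * ((b m / σ ^ 2) ^ 2 - 1 / σ ^ 2)) :
    ¬ IsLocalMax (fun t : ℝ => ∑ m, a m * Real.exp (-(c m + 2 * b m * t + t ^ 2) / (2 * σ ^ 2))) 0 := by
  have hσ2 : (σ:ℝ)^2 ≠ 0 := by positivity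
  set φ' : ℝ → ℝ := fun t => ∑ m, a m *
      (Real.exp (-(c m + 2 * b m * t + t ^ 2) / (2 * σ ^ 2)) * (-(b m + t) / σ ^ 2)) with hφ'
  have hu : ∀ (m : Fin M) (t : ℝ),
      HasDerivAt (fun t => -(c m + 2 * b m * t + t ^ 2) / (2 * σ ^ 2)) (-(b m + t) / σ ^ 2) t := by
    intro m t
    have h1 : HasDerivAt (fun t : ℝ => c m + 2 * b m * t + t ^ 2) (2 * b m + 2 * t) t := by
      have := (((hasDerivAt_id t).const_mul (2 * b m)).const_add (c m)).add (hasDerivAt_pow 2 t)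
      simpa [mul_comm, Pi.add_def] using this
    have := h1.fun_neg.div_const (2 * σ ^ 2)
    refine this.congr_deriv ?_
    field_simp
  have hE : ∀ (m : Fin M) (t : ℝ),
      HasDerivAt (fun t => Real.exp (-(c m + 2 * b m * t + t ^ 2) / (2 * σ ^ 2)))
        (Real.exp (-(c m + 2 * b m * t + t ^ 2) / (2 * σ ^ 2)) * (-(b m + t) / σ ^ 2)) t :=
    fun m t => (hu m t).exp
  have hd : ∀ t, HasDerivAt
      (fun t : ℝ => ∑ m, a m * Real.exp (-(c m + 2 * b m * t + t ^ 2) / (2 * σ ^ 2))) (φ' t) t := by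
    intro t
    rw [hφ']
    exact HasDerivAt.fun_sum fun m _ => (hE m t).const_mul (a m)
  have hg : ∀ (m : Fin M) (t : ℝ),
      HasDerivAt (fun t : ℝ => -(b m + t) / σ ^ 2) (-1 / σ ^ 2) t := by
    intro m t
    have := (((hasDerivAt_id t).const_add (b m)).neg).div_const (σ ^ 2)
    simpa using this
  set L : ℝ := ∑ m, a m *
      (Real.exp (-(c m + 2 * b m * 0 + 0 ^ 2) / (2 * σ ^ 2)) * (-(b m + 0) / σ ^ 2) * (-(b m + 0) / σ ^ 2)
        + Real.exp (-(c m + 2 * b m * 0 + 0 ^ 2) / (2 * σ ^ 2)) * (-1 / σ ^ 2)) with hLdef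
  have hL : HasDerivAt φ' L 0 := by
    rw [hφ', hLdef]
    exact HasDerivAt.fun_sum fun m _ => ((hE m 0).mul (hg m 0)).const_mul (a m)
  have hLpos : 0 < L := by
    have hLeq : L = ∑ m, a m * Real.exp (-(c m) / (2 * σ ^ 2)) * ((b m / σ ^ 2) ^ 2 - 1 / σ ^ 2) := by
      rw [hLdef]
      refine Finset.sum_congr rfl fun m _ => ?_
      have harg : -(c m + 2 * b m * 0 + 0 ^ 2) / (2 * σ ^ 2) = -(c m) / (2 * σ ^ 2) := by ring_nf
      rw [harg]
      ring
    rw [hLeq]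
    exact hpos
  exact aux_not_isLocalMax hd hL hLpos

/-- For a mixture of spherical Gaussians `f(x) = ∑ m, a m * exp(-|x - xm m|²/(2σ²))` on
`ℝⁿ` with common variance `σ² > 0` and positive weights, any local maximum `x'` of `f`
lies within distance `√n σ` of the set of mean vectors:
`min_{1 ≤ m ≤ M} |x' - xm m| ≤ √n σ`. -/
theorem spherical_gmm_mode_min_distance (n M : ℕ) (hM : 0 < M) (σ : ℝ) (hσ : 0 < σ)
    (a : Fin M → ℝ) (ha : ∀ m, 0 < a m)
    (xm : Fin M → EuclideanSpace ℝ (Fin n))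
    (f : EuclideanSpace ℝ (Fin n) → ℝ)
    (hf : ∀ x, f x = ∑ m, a m * Real.exp (-‖x - xm m‖ ^ 2 / (2 * σ ^ 2)))
    (x' : EuclideanSpace ℝ (Fin n)) (hx' : IsLocalMax f x') :
    Finset.univ.inf'
        (by simpa [Finset.univ_nonempty_iff] using Fin.pos_iff_nonempty.mp hM)
        (fun m => dist x' (xm m))
      ≤ Real.sqrt n * σ := by
  by_contra hcon
  push_neg at hcon
  have hRc : ∀ m, Real.sqrt n * σ < dist x' (xm m) := fun m =>
    lt_of_lt_of_le hcon (Finset.inf'_le _ (Finset.mem_univ m))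
  -- the case n = 0 is trivial since the space is a single point
  rcases Nat.eq_zero_or_pos n with hn | hn
  · subst hn
    have h := hRc ⟨0, hM⟩
    have hd0 : dist x' (xm ⟨0, hM⟩) = 0 := by
      rw [EuclideanSpace.dist_eq]
      simp
    rw [hd0] at h
    simp at h
  -- main case
  set c : Fin M → ℝ := fun m => ‖x' - xm m‖ ^ 2 with hc
  set b : Fin M → Fin n → ℝ := fun m i => (x' - xm m) i with hbdef
  have hcbig : ∀ m, (n : ℝ) * σ ^ 2 < c m := by
    intro m
    have h := hRc m
    have h0 : 0 ≤ Real.sqrt n * σ := mul_nonneg (Real.sqrt_nonneg _) hσ.le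
    calc (n : ℝ) * σ ^ 2 = (Real.sqrt n * σ) ^ 2 := by
          rw [mul_pow, Real.sq_sqrt (Nat.cast_nonneg n)]
      _ < dist x' (xm m) ^ 2 := by
          exact pow_lt_pow_left₀ h h0 (by norm_num)
      _ = c m := by rw [hc, dist_eq_norm]
  have hsum_b : ∀ m, ∑ i, (b m i) ^ 2 = c m := by
    intro m
    show ∑ i, ((x' - xm m) i) ^ 2 = ‖x' - xm m‖ ^ 2
    rw [← real_inner_self_eq_norm_sq (x' - xm m), PiLp.inner_apply]
    simp [RCLike.inner_apply, pow_two]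
  -- total second derivative is positive, so some direction has positive second derivative
  set S : Fin n → ℝ := fun i =>
    ∑ m, a m * Real.exp (-(c m) / (2 * σ ^ 2)) * ((b m i / σ ^ 2) ^ 2 - 1 / σ ^ 2) with hS
  have hStot : 0 < ∑ i, S i := by
    rw [hS]
    rw [Finset.sum_comm]
    have : ∀ m ∈ Finset.univ, (0:ℝ) <
        ∑ i, a m * Real.exp (-(c m) / (2 * σ ^ 2)) * ((b m i / σ ^ 2) ^ 2 - 1 / σ ^ 2) := by
      intro m _
      have heq : ∑ i, a m * Real.exp (-(c m) / (2 * σ ^ 2)) * ((b m i / σ ^ 2) ^ 2 - 1 / σ ^ 2)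
          = a m * Real.exp (-(c m) / (2 * σ ^ 2)) * ((c m - n * σ ^ 2) / σ ^ 4) := by
        rw [← Finset.mul_sum]
        congr 1
        have : ∑ i, ((b m i / σ ^ 2) ^ 2 - 1 / σ ^ 2)
            = (∑ i, (b m i) ^ 2) / σ ^ 4 - n / σ ^ 2 := by
          rw [Finset.sum_sub_distrib, Finset.sum_div]
          congr 1
          · refine Finset.sum_congr rfl fun i _ => ?_
            rw [div_pow, ← pow_mul]
          · simp [div_eq_mul_inv]
        rw [this, hsum_b m]
        field_simp
      rw [heq]
      have h1 : 0 < c m - n * σ ^ 2 := by linarith [hcbig m]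
      have h2 : (0:ℝ) < σ ^ 4 := by positivity
      exact mul_pos (mul_pos (ha m) (Real.exp_pos _)) (div_pos h1 h2)
    calc (0:ℝ) < ∑ m, ∑ i, a m * Real.exp (-(c m) / (2 * σ ^ 2)) * ((b m i / σ ^ 2) ^ 2 - 1 / σ ^ 2) := by
          apply Finset.sum_pos
          · exact this
          · simpa [Finset.univ_nonempty_iff] using Fin.pos_iff_nonempty.mp hM
      _ = _ := rfl
  have hSi : ∃ i, 0 < S i := by
    by_contra h
    push_neg at h
    have : ∑ i, S i ≤ 0 := Finset.sum_nonpos fun i _ => h i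
    linarith
  obtain ⟨i, hi⟩ := hSi
  -- restrict f to the line through x' in direction e_i
  set e : EuclideanSpace ℝ (Fin n) := EuclideanSpace.single i (1:ℝ) with he
  have hline : ∀ t : ℝ, f (x' + t • e)
      = ∑ m, a m * Real.exp (-(c m + 2 * b m i * t + t ^ 2) / (2 * σ ^ 2)) := by
    intro t
    rw [hf]
    refine Finset.sum_congr rfl fun m _ => ?_
    congr 2
    have hre : x' + t • e - xm m = (x' - xm m) + t • e := by abel
    rw [hre, norm_add_sq_real]
    have h1 : inner (𝕜 := ℝ) (x' - xm m) (t • e) = t * b m i := by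
      rw [real_inner_smul_right, he]
      have : inner (𝕜 := ℝ) (x' - xm m) (EuclideanSpace.single i (1:ℝ)) = b m i := by
        rw [EuclideanSpace.inner_single_right]
        simp [hbdef]
      rw [this]
    rw [h1]
    have h2 : ‖t • e‖ ^ 2 = t ^ 2 := by
      rw [norm_smul, he, EuclideanSpace.norm_single]
      simp [mul_pow, sq_abs]
    rw [h2, hc]
    ring
  have hTmax : IsLocalMax (fun t : ℝ =>
      ∑ m, a m * Real.exp (-(c m + 2 * b m i * t + t ^ 2) / (2 * σ ^ 2))) 0 := by
    have hT : ContinuousAt (fun t : ℝ => x' + t • e) 0 := by fun_prop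
    have htend : Filter.Tendsto (fun t : ℝ => x' + t • e) (nhds 0) (nhds x') := by
      simpa using hT.tendsto
    have hev : ∀ᶠ t in nhds (0:ℝ), f (x' + t • e) ≤ f x' := htend.eventually hx'
    have hx0 : f x' = ∑ m, a m * Real.exp (-(c m + 2 * b m i * 0 + 0 ^ 2) / (2 * σ ^ 2)) := by
      rw [← hline 0]
      simp
    refine hev.mono fun t ht => ?_
    simp only []
    rw [← hline t, ← hline 0]
    simpa using ht
  exact aux_gauss_line σ hσ a c (fun m => b m i) hi hTmax
end
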